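/- arXiv:1205.2119 — 2 statements merged into one kernel-verified Lean document; each statement's English description precedes it below -/
import Mathlib

section
/- Let k be a field, R = k, S = k[[X]], R̃ = k[[X]], S̃ = k[[X]]/(X²), with φ : k → k[[X]] the inclusion, α : k → k[[X]] the inclusion, β : k[[X]] → k[[X]]/(X²) the quotient map, and φ̃ : k[[X]] → k[[X]]/(X²) the quotient map. Then the square commutes, α is weakly regular, and fd_R̃(S̃) = 1 < 2 = edim(α) + fd_S(S̃) + fd_R(S); i.e., the inequality fd(φ̃) ≤ edim(α) + fd(β) + fd(φ) can be strict. -/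
open IsLocalRing

universe u

/-- The minimal number of generators of an ideal. -/
noncomputable def minGens {A : Type u} [CommRing A] (I : Ideal A) : ℕ :=
  sInf {n : ℕ | ∃ s : Finset A, s.card = n ∧ Ideal.span (s : Set A) = I}

/-- Embedding dimension of a local ring: minimal number of generators of the maximal ideal. -/
noncomputable def edim (A : Type u) [CommRing A] [IsLocalRing A] : ℕ :=
  minGens (IsLocalRing.maximalIdeal A)

/-- A regular local ring: Noetherian local with Krull dimension equal to embedding dimension. -/
def IsRegularLocalRing' (A : Type u) [CommRing A] : Prop :=
  ∃ _ : IsLocalRing A, IsNoetherianRing A ∧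
    ringKrullDim A = (minGens (IsLocalRing.maximalIdeal A) : WithBot (WithTop ℕ))

/-- `pdLE R n M` : the projective dimension of `M` over `R` is at most `n`
(via vanishing of the `n`-th syzygy in the canonical free resolution). -/
def pdLE (R : Type u) [CommRing R] : ℕ → ∀ (M : Type u) [AddCommGroup M] [Module R M], Prop
  | 0, M, _, _ => Module.Projective R M
  | n+1, M, _, _ => pdLE R n ↥(LinearMap.ker (Finsupp.linearCombination R (id : M → M)))

/-- Projective dimension, valued in `ℕ∞`. -/
noncomputable def pdim (R : Type u) [CommRing R] (M : Type u) [AddCommGroup M] [Module R M] :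
    ℕ∞ :=
  sInf {n : ℕ∞ | ∃ k : ℕ, (k : ℕ∞) = n ∧ pdLE R k M}

/-- `fdLE R n M` : the flat dimension of `M` over `R` is at most `n`. -/
def fdLE (R : Type u) [CommRing R] : ℕ → ∀ (M : Type u) [AddCommGroup M] [Module R M], Prop
  | 0, M, _, _ => Module.Flat R M
  | n+1, M, _, _ => fdLE R n ↥(LinearMap.ker (Finsupp.linearCombination R (id : M → M)))

/-- Flat dimension, valued in `ℕ∞`. -/
noncomputable def fdim (R : Type u) [CommRing R] (M : Type u) [AddCommGroup M] [Module R M] :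
    ℕ∞ :=
  sInf {n : ℕ∞ | ∃ k : ℕ, (k : ℕ∞) = n ∧ fdLE R k M}

open TensorProduct LinearMap

universe v

section
variable (R : Type u) [CommRing R] [IsDomain R]

/-- Over a domain, scalar multiplication by a nonzero element is injective on a flat module. -/
lemma flat_smul_injective (M : Type v) [AddCommGroup M] [Module R M] [Module.Flat R M]
    {a : R} (ha : a ≠ 0) : Function.Injective (fun m : M => a • m) := by
  have hinj : Function.Injective ⇑(LinearMap.lsmul R R a) := by
    intro x y h
    simpa using mul_left_cancel₀ ha (by simpa [LinearMap.lsmul_apply, smul_eq_mul] using h)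
  have h2 := Module.Flat.rTensor_preserves_injective_linearMap (M := M)
    (LinearMap.lsmul R R a) hinj
  intro m m' h
  have key : ∀ z : R ⊗[R] M, (TensorProduct.lid R M) ((rTensor M (LinearMap.lsmul R R a)) z)
      = a • (TensorProduct.lid R M) z := by
    intro z
    induction z using TensorProduct.induction_on with
    | zero => simp
    | tmul x n => simp [smul_smul, mul_comm]
    | add x y hx hy => simp [hx, hy]
  have : (rTensor M (LinearMap.lsmul R R a)) ((TensorProduct.lid R M).symm m)
      = (rTensor M (LinearMap.lsmul R R a)) ((TensorProduct.lid R M).symm m') := by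
    apply (TensorProduct.lid R M).injective
    rw [key, key]
    simpa using h
  exact (TensorProduct.lid R M).symm.injective (h2 this)

/-- Over a PID (domain), torsion-free modules are flat. -/
lemma flat_of_torsionFree [IsPrincipalIdealRing R] (M : Type v) [AddCommGroup M] [Module R M]
    [NoZeroSMulDivisors R M] : Module.Flat R M := by
  rw [Module.Flat.iff_rTensor_injective']
  intro I
  obtain ⟨a, rfl⟩ := (IsPrincipalIdealRing.principal I).1
  by_cases ha : a = 0
  · subst ha
    have h0 : (Submodule.span R {(0:R)}) = ⊥ := by simp
    rw [h0]
    have hsub : Subsingleton ↥(⊥ : Submodule R R) := inferInstance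
    intro x y _; exact Subsingleton.elim x y
  · -- a ≠ 0
    set I : Submodule R R := Submodule.span R {a} with hI
    let e : R ≃ₗ[R] ↥(Submodule.span R {a}) := LinearEquiv.toSpanNonzeroSingleton R R a ha
    have hcomp : I.subtype ∘ₗ (e : R →ₗ[R] ↥I) = LinearMap.lsmul R R a := by
      ext
      simp only [LinearMap.comp_apply, Submodule.subtype_apply, LinearMap.lsmul_apply,
        smul_eq_mul, mul_one, LinearEquiv.coe_coe]
      show ((LinearEquiv.toSpanNonzeroSingleton R R a ha) 1 : R) = a
      rw [LinearEquiv.toSpanNonzeroSingleton_one]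
    have hsmul_inj : Function.Injective ⇑(rTensor M (LinearMap.lsmul R R a)) := by
      intro z w h
      have key : ∀ z : R ⊗[R] M, (TensorProduct.lid R M) ((rTensor M (LinearMap.lsmul R R a)) z)
          = a • (TensorProduct.lid R M) z := by
        intro z
        induction z using TensorProduct.induction_on with
        | zero => simp
        | tmul x n => simp [smul_smul, mul_comm]
        | add x y hx hy => simp [hx, hy]
      apply (TensorProduct.lid R M).injective
      apply smul_right_injective M ha (a₁ := (TensorProduct.lid R M) z)
        (a₂ := (TensorProduct.lid R M) w)
      show a • (TensorProduct.lid R M) z = a • (TensorProduct.lid R M) w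
      rw [← key, ← key, h]
    have hsurj : Function.Surjective ⇑(rTensor M (e : R →ₗ[R] ↥I)) := by
      intro z
      induction z using TensorProduct.induction_on with
      | zero => exact ⟨0, by simp⟩
      | tmul x n =>
        refine ⟨e.symm x ⊗ₜ n, ?_⟩
        rw [rTensor_tmul]
        congr 1
        exact e.apply_symm_apply x
      | add x y hx hy =>
        obtain ⟨x', hx'⟩ := hx; obtain ⟨y', hy'⟩ := hy
        exact ⟨x' + y', by rw [map_add, hx', hy']⟩
    intro z w h
    obtain ⟨z', rfl⟩ := hsurj z
    obtain ⟨w', rfl⟩ := hsurj w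
    rw [← LinearMap.comp_apply, ← rTensor_comp, ← LinearMap.comp_apply (rTensor M I.subtype),
      ← rTensor_comp, hcomp] at h
    rw [hsmul_inj h]
end

open IsLocalRing PowerSeries


lemma rkd (k : Type u) [Field k] : ringKrullDim (PowerSeries k) = 1 := by
  have hXne : (X : PowerSeries k) ≠ 0 := X_ne_zero
  apply le_antisymm
  · rw [ringKrullDim, Order.krullDim_eq_iSup_length]
    show _ ≤ ((1 : ℕ∞) : WithBot ℕ∞)
    rw [WithBot.coe_le_coe]
    apply iSup_le
    intro p
    by_contra hlen
    push_neg at hlen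
    have h2 : 2 ≤ p.length := by exact_mod_cast hlen
    obtain ⟨_, P, -, hun⟩ := (IsDiscreteValuationRing.iff_pid_with_one_nonzero_prime
      (PowerSeries k)).mp inferInstance
    have i0 : (0 : Fin (p.length + 1)) < ⟨1, by omega⟩ := by simp [Fin.lt_def]
    have i1 : (⟨1, by omega⟩ : Fin (p.length + 1)) < ⟨2, by omega⟩ := by simp [Fin.lt_def]
    have h01 := p.strictMono i0
    have h12 := p.strictMono i1
    have hne1 : (p ⟨1, by omega⟩).asIdeal ≠ ⊥ := by
      intro hb
      have := (PrimeSpectrum.asIdeal_lt_asIdeal _ _).mpr h01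
      rw [hb] at this
      exact (not_lt_bot this)
    have hne2 : (p ⟨2, by omega⟩).asIdeal ≠ ⊥ := by
      intro hb
      have := (PrimeSpectrum.asIdeal_lt_asIdeal _ _).mpr h12
      rw [hb] at this
      exact (not_lt_bot this)
    have e1 := hun _ ⟨hne1, (p ⟨1, by omega⟩).isPrime⟩
    have e2 := hun _ ⟨hne2, (p ⟨2, by omega⟩).isPrime⟩
    have := (PrimeSpectrum.asIdeal_lt_asIdeal _ _).mpr h12
    rw [e1, e2] at this
    exact lt_irrefl _ this
  · have pbot : PrimeSpectrum (PowerSeries k) := ⟨⊥, Ideal.bot_prime⟩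
    have pX : PrimeSpectrum (PowerSeries k) := ⟨Ideal.span {X}, span_X_isPrime⟩
    let p : LTSeries (PrimeSpectrum (PowerSeries k)) :=
      ⟨1, ![⟨⊥, Ideal.bot_prime⟩, ⟨Ideal.span {X}, span_X_isPrime⟩], by
        intro i
        fin_cases i
        change (⟨⊥, Ideal.bot_prime⟩ : PrimeSpectrum (PowerSeries k)) < ⟨Ideal.span {X}, span_X_isPrime⟩
        rw [← PrimeSpectrum.asIdeal_lt_asIdeal]
        show (⊥ : Ideal (PowerSeries k)) < Ideal.span {X}
        rw [bot_lt_iff_ne_bot, Ne, Ideal.span_singleton_eq_bot]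
        exact hXne⟩
    have := Order.LTSeries.length_le_krullDim (p := p)
    simpa [ringKrullDim, p] using this

lemma minGens_max (k : Type u) [Field k] :
    sInf {n : ℕ | ∃ s : Finset (PowerSeries k), s.card = n ∧
      Ideal.span (s : Set (PowerSeries k)) = IsLocalRing.maximalIdeal (PowerSeries k)} = 1 := by
  have h1 : 1 ∈ {n : ℕ | ∃ s : Finset (PowerSeries k), s.card = n ∧
      Ideal.span (s : Set (PowerSeries k)) = IsLocalRing.maximalIdeal (PowerSeries k)} := by
    refine ⟨{X}, Finset.card_singleton _, ?_⟩
    rw [Finset.coe_singleton, maximalIdeal_eq_span_X]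
  have hle := Nat.sInf_le h1
  have h0 : 0 ∉ {n : ℕ | ∃ s : Finset (PowerSeries k), s.card = n ∧
      Ideal.span (s : Set (PowerSeries k)) = IsLocalRing.maximalIdeal (PowerSeries k)} := by
    rintro ⟨s, hs, hspan⟩
    rw [Finset.card_eq_zero] at hs
    subst hs
    simp only [Finset.coe_empty, Ideal.span_empty] at hspan
    have : (X : PowerSeries k) ∈ IsLocalRing.maximalIdeal (PowerSeries k) := by
      rw [maximalIdeal_eq_span_X]; exact Ideal.mem_span_singleton_self _
    rw [← hspan] at this
    exact X_ne_zero ((Submodule.mem_bot _).mp this)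
  have : sInf {n : ℕ | ∃ s : Finset (PowerSeries k), s.card = n ∧
      Ideal.span (s : Set (PowerSeries k)) = IsLocalRing.maximalIdeal (PowerSeries k)} ≠ 0 := by
    intro hz
    rw [Nat.sInf_eq_zero] at hz
    rcases hz with hz | hz
    · exact h0 hz
    · rw [hz] at h1; exact h1
  omega

section fdimHelpers
variable (R : Type u) [CommRing R] (M : Type u) [AddCommGroup M] [Module R M]

lemma fdim_eq_zero [Module.Flat R M] : fdim R M = 0 := by
  apply le_antisymm _ zero_le
  exact sInf_le ⟨0, by simp, ‹Module.Flat R M›⟩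

lemma fdim_eq_one (h1 : fdLE R 1 M) (h0 : ¬ Module.Flat R M) : fdim R M = 1 := by
  apply le_antisymm
  · exact sInf_le ⟨1, by simp, h1⟩
  · apply le_sInf
    rintro n ⟨j, rfl, hj⟩
    rw [show ((1:ℕ∞) = ((1:ℕ):ℕ∞)) from rfl, Nat.cast_le]
    by_contra hlt
    push_neg at hlt
    interval_cases j
    exact h0 hj

end fdimHelpers

section notflat
variable (k : Type u) [Field k]

set_option maxHeartbeats 1000000 in
set_option synthInstance.maxHeartbeats 200000 in
lemma not_flat_quot : ¬ Module.Flat (PowerSeries k)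
    (PowerSeries k ⧸ Ideal.span {(PowerSeries.X : PowerSeries k) ^ 2}) := by
  intro hf
  haveI := hf
  have hXne : (PowerSeries.X : PowerSeries k) ≠ 0 := PowerSeries.X_ne_zero
  have hinj := flat_smul_injective (PowerSeries k)
    (PowerSeries k ⧸ Ideal.span {(PowerSeries.X : PowerSeries k) ^ 2}) (ha := hXne)
  have hz : (PowerSeries.X : PowerSeries k) •
      (Ideal.Quotient.mk (Ideal.span {(PowerSeries.X : PowerSeries k) ^ 2}) PowerSeries.X)
        = 0 := by
    show (PowerSeries.X : PowerSeries k) •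
      Submodule.Quotient.mk (p := Ideal.span {(PowerSeries.X : PowerSeries k) ^ 2})
        PowerSeries.X = 0
    rw [← Submodule.Quotient.mk_smul, smul_eq_mul, ← pow_two]
    exact (Submodule.Quotient.mk_eq_zero _).mpr (Ideal.mem_span_singleton_self _)
  have hX0 : (Ideal.Quotient.mk (Ideal.span {(PowerSeries.X : PowerSeries k) ^ 2})
      PowerSeries.X) = 0 := by
    apply hinj
    show (PowerSeries.X : PowerSeries k) • _ = (PowerSeries.X : PowerSeries k) • (0 :
      PowerSeries k ⧸ Ideal.span {(PowerSeries.X : PowerSeries k) ^ 2})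
    rw [hz, smul_zero]
  rw [Ideal.Quotient.eq_zero_iff_mem, Ideal.mem_span_singleton] at hX0
  obtain ⟨c, hc⟩ := hX0
  have h2 : (PowerSeries.X : PowerSeries k) * 1
      = PowerSeries.X * (PowerSeries.X * c) := by
    calc (PowerSeries.X : PowerSeries k) * 1 = PowerSeries.X := mul_one _
    _ = PowerSeries.X ^ 2 * c := hc
    _ = PowerSeries.X * (PowerSeries.X * c) := by ring
  exact PowerSeries.X_prime.not_isUnit
    (IsUnit.of_mul_eq_one _ (mul_left_cancel₀ hXne h2).symm)

set_option maxHeartbeats 1000000 in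
set_option synthInstance.maxHeartbeats 400000 in
lemma fdLE_one_quot : fdLE (PowerSeries k) 1
    (PowerSeries k ⧸ Ideal.span {(PowerSeries.X : PowerSeries k) ^ 2}) := by
  show Module.Flat (PowerSeries k) ↥(LinearMap.ker (Finsupp.linearCombination (PowerSeries k)
    (id : (PowerSeries k ⧸ Ideal.span {(PowerSeries.X : PowerSeries k) ^ 2}) →
      (PowerSeries k ⧸ Ideal.span {(PowerSeries.X : PowerSeries k) ^ 2}))))
  haveI hnz : NoZeroSMulDivisors (PowerSeries k)
      ((PowerSeries k ⧸ Ideal.span {(PowerSeries.X : PowerSeries k) ^ 2}) →₀ PowerSeries k) :=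
    ⟨fun {c x} h => by
      by_cases hc : c = 0
      · exact Or.inl hc
      · exact Or.inr ((smul_eq_zero_iff_right hc).mp h)⟩
  haveI : NoZeroSMulDivisors (PowerSeries k) ↥(LinearMap.ker (Finsupp.linearCombination (PowerSeries k)
    (id : (PowerSeries k ⧸ Ideal.span {(PowerSeries.X : PowerSeries k) ^ 2}) →
      (PowerSeries k ⧸ Ideal.span {(PowerSeries.X : PowerSeries k) ^ 2})))) :=
    ⟨fun {c x} h => by
      by_cases hc : c = 0
      · exact Or.inl hc
      · exact Or.inr ((smul_eq_zero_iff_right hc).mp h)⟩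
  exact flat_of_torsionFree (PowerSeries k) ↥(LinearMap.ker (Finsupp.linearCombination (PowerSeries k)
    (id : (PowerSeries k ⧸ Ideal.span {(PowerSeries.X : PowerSeries k) ^ 2}) →
      (PowerSeries k ⧸ Ideal.span {(PowerSeries.X : PowerSeries k) ^ 2}))))

end notflat

/-- the example `k → k[[X]] → k[[X]]/(X²)`: the inequality
`fd(φ̃) ≤ edim(α) + fd(β) + fd(φ)` can be strict. -/
theorem stmt11 (k : Type u) [Field k] :
    ((Ideal.Quotient.mk (Ideal.span {(PowerSeries.X : PowerSeries k) ^ 2})).comp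
        (algebraMap k (PowerSeries k)) =
      algebraMap k (PowerSeries k ⧸ Ideal.span {(PowerSeries.X : PowerSeries k) ^ 2})) ∧
    Module.Flat k (PowerSeries k) ∧
    IsRegularLocalRing' (PowerSeries k) ∧
    fdim (PowerSeries k)
      (PowerSeries k ⧸ Ideal.span {(PowerSeries.X : PowerSeries k) ^ 2}) = 1 ∧
    fdim k (PowerSeries k) = 0 ∧
    edim (PowerSeries k) = 1 ∧
    ((1 : ℕ∞) < 2) ∧
    fdim (PowerSeries k)
        (PowerSeries k ⧸ Ideal.span {(PowerSeries.X : PowerSeries k) ^ 2}) <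
      (edim (PowerSeries k) : ℕ∞) +
        fdim (PowerSeries k)
          (PowerSeries k ⧸ Ideal.span {(PowerSeries.X : PowerSeries k) ^ 2}) +
        fdim k (PowerSeries k) := by
  have hXne : (PowerSeries.X : PowerSeries k) ≠ 0 := PowerSeries.X_ne_zero
  have hmin : minGens (IsLocalRing.maximalIdeal (PowerSeries k)) = 1 := minGens_max k
  have hfd1 : fdim (PowerSeries k)
      (PowerSeries k ⧸ Ideal.span {(PowerSeries.X : PowerSeries k) ^ 2}) = 1 :=
    fdim_eq_one _ _ (fdLE_one_quot k) (not_flat_quot k)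
  have hfd0 : fdim k (PowerSeries k) = 0 := fdim_eq_zero _ _
  have hedim : edim (PowerSeries k) = 1 := hmin
  refine ⟨rfl, inferInstance, ⟨inferInstance, inferInstance, ?_⟩, hfd1, hfd0, hedim, ?_, ?_⟩
  · rw [rkd k, hmin]; norm_num; rfl
  · norm_num
  · rw [hfd1, hfd0, hedim]
    norm_num
end

section
/- Let α : (R,m,k) → (R̃,m̃,k̃) be a flat local homomorphism of Noetherian local rings such that m R̃ = m̃ and the residue field extension k → k̃ is separable (i.e., α is a Cohen homomorphism), and let β : (S,n,l) → (S̃,ñ,l̃) be a flat local homomorphism with S̃ complete. Suppose φ : R → S is a local homomorphism and we are given a commutative square of residue field extensions compatible with α, β, φ. Then there exists a local homomorphism φ̃ : R̃ → S̃ with φ̃ ∘ α = β ∘ φ inducing the prescribed map on residue fields. -/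
open IsLocalRing

universe u

section Stmt18Aux

open TensorProduct LinearMap


section FlatLemma
theorem flat_ker_inter_smul {R' : Type u} [CommRing R'] {B' P : Type u} [CommRing B'] [CommRing P]
    [Algebra R' B'] [Algebra R' P] [Module.Flat R' B'] (I : Ideal R')
    (π : P →ₐ[R'] B') (hπ : Function.Surjective π)
    {x : P} (hx1 : π x = 0) (hx2 : x ∈ I.map (algebraMap R' P)) :
    x ∈ I • (LinearMap.ker π.toLinearMap) := by
  classical
  set f := π.toLinearMap with hf
  set k := (LinearMap.ker f).subtype with hk
  -- multiplication maps
  let μP : I ⊗[R'] P →ₗ[R'] P := TensorProduct.lift ((LinearMap.lsmul R' P).comp I.subtype)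
  let μB : I ⊗[R'] B' →ₗ[R'] B' := TensorProduct.lift ((LinearMap.lsmul R' B').comp I.subtype)
  have hμB_inj : Function.Injective μB := by
    have h1 : Function.Injective (rTensor B' I.subtype) :=
      (Module.Flat.iff_rTensor_injective' (R := R') (M := B')).mp ‹Module.Flat R' B'› I
    have : μB = (TensorProduct.lid R' B').toLinearMap.comp (rTensor B' I.subtype) := by
      apply TensorProduct.ext'
      intro i b
      simp [μB]
    rw [this]
    exact (TensorProduct.lid R' B').injective.comp h1
  have hrange : LinearMap.range μP = I • (⊤ : Submodule R' P) := by
    apply le_antisymm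
    · rintro y ⟨η, rfl⟩
      induction η using TensorProduct.induction_on with
      | zero => simp
      | tmul i p =>
          have h : μP (i ⊗ₜ p) = (i : R') • p := by simp [μP]
          rw [h]
          exact Submodule.smul_mem_smul i.2 (Submodule.mem_top (R := R'))
      | add a b ha hb => rw [map_add]; exact Submodule.add_mem _ ha hb
    · rw [Submodule.smul_le]
      intro r hr n _
      exact ⟨⟨r, hr⟩ ⊗ₜ n, by simp [μP]⟩
  have hx2' : x ∈ LinearMap.range μP := by
    rw [hrange, Ideal.smul_top_eq_map]
    exact hx2
  obtain ⟨η, rfl⟩ := hx2'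
  -- naturality
  have hnat : μB.comp (lTensor I f) = f.comp μP := by
    apply TensorProduct.ext'
    intro i p
    simp [μP, μB]
  have hη0 : lTensor I f η = 0 := by
    apply hμB_inj
    rw [map_zero]
    have := congrArg (fun g => g η) hnat
    simpa using (this.trans hx1)
  have hexact : Function.Exact (lTensor I k) (lTensor I f) :=
    lTensor_exact I (f.exact_subtype_ker_map) hπ
  obtain ⟨ζ, hζ⟩ := (hexact (η)).mp hη0
  rw [← hζ]
  -- μP ∘ lTensor k lands in I • ker
  clear hζ hη0
  induction ζ using TensorProduct.induction_on with
  | zero => simp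
  | tmul i z =>
      have : μP (lTensor I k (i ⊗ₜ z)) = (i : R') • (z : P) := by simp [μP, k]
      rw [this]
      exact Submodule.smul_mem_smul i.2 z.2
  | add a b ha hb => rw [map_add, map_add]; exact Submodule.add_mem _ ha hb

end FlatLemma

/-- Lifting property: every `R'`-algebra map from `B'` into `C ⧸ J`, where `C` is killed by `I`
and `J` is square-zero, lifts to `C`. -/
def LP (R' : Type u) [CommRing R'] (I : Ideal R') (B' : Type u) [CommRing B'] [Algebra R' B'] :
    Prop :=
  ∀ (C : Type u) [CommRing C] [Algebra R' C], I.map (algebraMap R' C) = ⊥ →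
    ∀ (J : Ideal C), J ^ 2 = ⊥ →
      ∀ u : B' →ₐ[R'] C ⧸ J, ∃ w : B' →ₐ[R'] C, (Ideal.Quotient.mkₐ R' J).comp w = u

set_option maxHeartbeats 2000000 in
theorem engine {R' B' : Type u} [CommRing R'] [CommRing B'] [Algebra R' B'] [Module.Flat R' B']
    (I : Ideal R') (hLP : LP R' I B')
    (C : Type u) [CommRing C] [Algebra R' C]
    (hI2 : (I.map (algebraMap R' C)) ^ 2 = ⊥)
    (J : Ideal C) (hJ : J ^ 2 = ⊥)
    (u : B' →ₐ[R'] C ⧸ J) : ∃ w : B' →ₐ[R'] C, (Ideal.Quotient.mkₐ R' J).comp w = u := by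
  classical
  set IC : Ideal C := I.map (algebraMap R' C) with hICdef
  -- Step 1: lift the reduction of `u` to `C ⧸ IC` using `hLP`.
  set C₂ := C ⧸ IC with hC₂
  have hICmap : I.map (algebraMap R' C₂) = ⊥ := by
    have h1 : algebraMap R' C₂ = (Ideal.Quotient.mk IC).comp (algebraMap R' C) := rfl
    rw [h1, ← Ideal.map_map]
    exact le_bot_iff.mp (le_trans (Ideal.map_mono le_rfl)
      (by rw [Ideal.map_quotient_self]))
  set J₂ : Ideal C₂ := J.map (Ideal.Quotient.mk IC) with hJ₂def
  have hJ₂ : J₂ ^ 2 = ⊥ := by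
    rw [hJ₂def, ← Ideal.map_pow, hJ, Ideal.map_bot]
  have hkillJ : ∀ a ∈ J, ((Ideal.Quotient.mkₐ R' J₂).comp (Ideal.Quotient.mkₐ R' IC)) a = 0 := by
    intro a ha
    have h1 : (Ideal.Quotient.mk IC) a ∈ J₂ := Ideal.mem_map_of_mem _ ha
    show Ideal.Quotient.mk J₂ (Ideal.Quotient.mk IC a) = 0
    exact Ideal.Quotient.eq_zero_iff_mem.mpr h1
  set g : C ⧸ J →ₐ[R'] C₂ ⧸ J₂ :=
    Ideal.Quotient.liftₐ J ((Ideal.Quotient.mkₐ R' J₂).comp (Ideal.Quotient.mkₐ R' IC)) hkillJ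
    with hgdef
  have hgmk : ∀ c : C, g (Ideal.Quotient.mk J c) =
      Ideal.Quotient.mk J₂ (Ideal.Quotient.mk IC c) := fun c => rfl
  obtain ⟨w₁, hw₁⟩ := hLP C₂ hICmap J₂ hJ₂ (g.comp u)
  have hw₁' : ∀ b : B', Ideal.Quotient.mk J₂ (w₁ b) = g (u b) := fun b =>
    congrArg (fun f => f b) hw₁
  -- Step 2: choose combined lifts.
  have hchoice : ∀ b : B', ∃ c : C,
      Ideal.Quotient.mk J c = u b ∧ Ideal.Quotient.mk IC c = w₁ b := by
    intro b
    obtain ⟨x, hx⟩ := Ideal.Quotient.mk_surjective (I := J) (u b)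
    have h1 : Ideal.Quotient.mk J₂ (Ideal.Quotient.mk IC x) = Ideal.Quotient.mk J₂ (w₁ b) := by
      rw [hw₁' b, ← hx, hgmk]
    have h2 : Ideal.Quotient.mk IC x - w₁ b ∈ J₂ :=
      (Ideal.Quotient.mk_eq_mk_iff_sub_mem _ _).mp h1
    obtain ⟨j, hjJ, hj⟩ := (Ideal.mem_map_iff_of_surjective _
      Ideal.Quotient.mk_surjective).mp h2
    refine ⟨x - j, ?_, ?_⟩
    · rw [map_sub, hx, Ideal.Quotient.eq_zero_iff_mem.mpr hjJ, sub_zero]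
    · rw [map_sub, hj]; ring
  choose cc hc1 hc2 using hchoice
  -- the polynomial algebra and the two maps
  set P := MvPolynomial B' R' with hP
  set π : P →ₐ[R'] B' := MvPolynomial.aeval _root_.id with hπdef
  have hπs : Function.Surjective π := fun b => ⟨MvPolynomial.X b, by rw [hπdef]; exact MvPolynomial.aeval_X _ _⟩
  set h : P →ₐ[R'] C := MvPolynomial.aeval cc with hhdef
  have hhJ : ∀ p : P, Ideal.Quotient.mk J (h p) = u (π p) := by
    have : (Ideal.Quotient.mkₐ R' J).comp h = u.comp π := by
      apply MvPolynomial.algHom_ext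
      intro b
      simp [hhdef, hπdef, hc1 b]
    intro p; exact congrArg (fun f => f p) this
  have hhIC : ∀ p : P, Ideal.Quotient.mk IC (h p) = w₁ (π p) := by
    have : (Ideal.Quotient.mkₐ R' IC).comp h = w₁.comp π := by
      apply MvPolynomial.algHom_ext
      intro b
      simp [hhdef, hπdef, hc2 b]
    intro p; exact congrArg (fun f => f p) this
  set Kpi : Ideal P := RingHom.ker π with hKpidef
  have hmemKpi : ∀ {p : P}, p ∈ Kpi ↔ π p = 0 := fun {p} => RingHom.mem_ker
  set K : Ideal C := J ⊓ IC with hKdef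
  have hK2 : ∀ x ∈ K, ∀ y ∈ K, x * y = 0 := by
    intro x hx y hy
    have : x * y ∈ J ^ 2 := by rw [pow_two]; exact Ideal.mul_mem_mul hx.1 hy.1
    rw [hJ] at this; simpa using this
  have hICK : ∀ x ∈ IC, ∀ y ∈ K, x * y = 0 := by
    intro x hx y hy
    have : x * y ∈ IC ^ 2 := by rw [pow_two]; exact Ideal.mul_mem_mul hx hy.2
    rw [hI2] at this; simpa using this
  have hhKpi : ∀ x ∈ Kpi, h x ∈ K := by
    intro x hx
    have hx0 : π x = 0 := hmemKpi.mp hx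
    refine Submodule.mem_inf.mpr ⟨?_, ?_⟩
    · rw [← Ideal.Quotient.eq_zero_iff_mem, hhJ, hx0, map_zero]
    · rw [← Ideal.Quotient.eq_zero_iff_mem, hhIC, hx0, map_zero]
  set IP : Ideal P := I.map (algebraMap R' P) with hIPdef
  have hhIP : ∀ x ∈ IP, h x ∈ IC := by
    intro x hx
    have h1 : h x ∈ IP.map (h : P →+* C) := Ideal.mem_map_of_mem _ hx
    rw [hIPdef, Ideal.map_map] at h1
    have h2 : (h : P →+* C).comp (algebraMap R' P) = algebraMap R' C := by
      ext r; simp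
    rwa [h2] at h1
  set L : Ideal P := Kpi ^ 2 ⊔ IP with hLdef
  have hhL : ∀ x ∈ L, h x ∈ IC := by
    intro x hx
    obtain ⟨a, ha, z, hz, rfl⟩ := Submodule.mem_sup.mp hx
    have ha' : h a ∈ IC := by
      have : a ∈ Kpi := (Ideal.pow_le_self two_ne_zero) ha
      exact (hhKpi a this).2
    rw [map_add]
    exact Ideal.add_mem _ ha' (hhIP z hz)
  -- the key vanishing
  have hstar : ∀ x ∈ Kpi, x ∈ L → h x = 0 := by
    intro x hx hxL
    obtain ⟨a, ha, z, hz, hxaz⟩ := Submodule.mem_sup.mp hxL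
    have ha' : a ∈ Kpi := (Ideal.pow_le_self two_ne_zero) ha
    have hzKpi : π z = 0 := by
      have : z = x - a := by rw [← hxaz]; ring
      rw [this, map_sub, hmemKpi.mp hx, hmemKpi.mp ha', sub_zero]
    have hzsmul : z ∈ I • (LinearMap.ker π.toLinearMap) :=
      flat_ker_inter_smul I π hπs hzKpi hz
    have hhz : h z = 0 := by
      refine Submodule.smul_induction_on hzsmul ?_ ?_
      · intro r hr n hn
        have hn' : h n ∈ IC := (hhKpi n (hmemKpi.mpr hn)).2
        have : h (r • n) = algebraMap R' C r * h n := by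
          rw [Algebra.smul_def, map_mul]; simp
        rw [this]
        have hr' : algebraMap R' C r ∈ IC := Ideal.mem_map_of_mem _ hr
        have : algebraMap R' C r * h n ∈ IC ^ 2 := by
          rw [pow_two]; exact Ideal.mul_mem_mul hr' hn'
        rw [hI2] at this; simpa using this
      · intro m n hm hn; rw [map_add, hm, hn, add_zero]
    have hha : h a = 0 := by
      rw [pow_two] at ha
      refine Submodule.mul_induction_on ha ?_ ?_
      · intro m hm n hn
        rw [map_mul]
        exact hK2 _ (hhKpi m hm) _ (hhKpi n hn)
      · intro m n hm hn; rw [map_add, hm, hn, add_zero]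
    rw [← hxaz, map_add, hha, hhz, add_zero]
  -- the quotient Q and the section s
  set Q := P ⧸ L with hQdef
  set τ : P →ₐ[R'] Q := Ideal.Quotient.mkₐ R' L with hτdef
  have hτmk : ∀ p : P, τ p = Ideal.Quotient.mk L p := fun p => rfl
  have hτs : Function.Surjective τ := Ideal.Quotient.mk_surjective
  have hQI : I.map (algebraMap R' Q) = ⊥ := by
    have h1 : algebraMap R' Q = (Ideal.Quotient.mk L).comp (algebraMap R' P) := rfl
    rw [h1, ← Ideal.map_map]
    refine le_bot_iff.mp (le_trans (Ideal.map_mono (le_sup_right : IP ≤ L)) ?_)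
    rw [Ideal.map_quotient_self]
  set KQ : Ideal Q := Kpi.map (Ideal.Quotient.mk L) with hKQdef
  have hKQ2 : KQ ^ 2 = ⊥ := by
    rw [hKQdef, ← Ideal.map_pow]
    refine le_bot_iff.mp (le_trans (Ideal.map_mono (le_sup_left : Kpi ^ 2 ≤ L)) ?_)
    rw [Ideal.map_quotient_self]
  have hτKQ : ∀ x ∈ Kpi, Ideal.Quotient.mk KQ (τ x) = 0 := by
    intro x hx
    exact Ideal.Quotient.eq_zero_iff_mem.mpr (Ideal.mem_map_of_mem _ hx)
  set e := Ideal.quotientKerAlgEquivOfSurjective hπs with hedef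
  have hesymm : ∀ p : P, e.symm (π p) = Ideal.Quotient.mk (RingHom.ker π) p := by
    intro p
    apply e.injective
    rw [AlgEquiv.apply_symm_apply]
    rfl
  set uQ : B' →ₐ[R'] Q ⧸ KQ :=
    (Ideal.Quotient.liftₐ Kpi ((Ideal.Quotient.mkₐ R' KQ).comp τ) (fun x hx => hτKQ x hx)).comp
      e.symm.toAlgHom with huQdef
  have huQπ : ∀ p : P, uQ (π p) = Ideal.Quotient.mk KQ (τ p) := by
    intro p
    rw [huQdef]
    simp only [AlgHom.coe_comp, Function.comp_apply, AlgEquiv.coe_algHom]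
    rw [hesymm p]
    rfl
  obtain ⟨s, hs⟩ := hLP Q hQI KQ hKQ2 uQ
  have hs' : ∀ b : B', Ideal.Quotient.mk KQ (s b) = uQ b := fun b => congrArg (fun f => f b) hs
  set ρ : P →ₐ[R'] Q := s.comp π with hρdef
  have hρτ : ∀ p : P, τ p - ρ p ∈ KQ := by
    intro p
    rw [← Ideal.Quotient.mk_eq_mk_iff_sub_mem]
    rw [hρdef]
    show Ideal.Quotient.mk KQ (τ p) = Ideal.Quotient.mk KQ (s (π p))
    rw [hs' (π p), huQπ p]
  have hρKpi : ∀ x ∈ Kpi, ρ x = 0 := by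
    intro x hx
    rw [hρdef]
    show s (π x) = 0
    rw [hmemKpi.mp hx, map_zero]
  -- choose representatives
  have hxxex : ∀ p : P, ∃ x : P, x ∈ Kpi ∧ τ x = τ p - ρ p := by
    intro p
    obtain ⟨x, hx, hx2⟩ := (Ideal.mem_map_iff_of_surjective _
      Ideal.Quotient.mk_surjective).mp (hρτ p)
    exact ⟨x, hx, hx2⟩
  choose xx hxxK hxx using hxxex
  set D : P → C := fun p => h (xx p) with hDdef
  -- well-definedness up to τ
  have hwd : ∀ a b : P, a ∈ Kpi → b ∈ Kpi → τ a = τ b → h a = h b := by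
    intro a b ha hb hab
    have h1 : a - b ∈ L := by
      rw [← Ideal.Quotient.eq_zero_iff_mem]
      show Ideal.Quotient.mk L a - Ideal.Quotient.mk L b = 0
      rw [← hτmk, ← hτmk, hab, sub_self]
    have h2 : h (a - b) = 0 := hstar _ (Ideal.sub_mem _ ha hb) h1
    rw [map_sub] at h2
    exact sub_eq_zero.mp h2
  have hD_mem : ∀ p : P, D p ∈ K := fun p => hhKpi _ (hxxK p)
  have hKslack : ∀ y : P, τ y ∈ KQ → ∀ k ∈ K, h y * k = 0 := by
    intro y hy k hk
    obtain ⟨x, hx, hx2⟩ := (Ideal.mem_map_iff_of_surjective _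
      Ideal.Quotient.mk_surjective).mp hy
    have h3 : τ x = τ y := (hτmk x).trans hx2
    have h1 : y - x ∈ L := by
      rw [← Ideal.Quotient.eq_zero_iff_mem]
      show τ (y - x) = 0
      rw [map_sub, h3, sub_self]
    have h2 : h y = h x + h (y - x) := by rw [map_sub]; ring
    rw [h2, add_mul, hK2 _ (hhKpi x hx) _ hk, hICK _ (hhL _ h1) _ hk, add_zero]
  have hD_add : ∀ p q : P, D (p + q) = D p + D q := by
    intro p q
    have h1 : τ (xx p + xx q) = τ (xx (p + q)) := by
      rw [map_add, hxx, hxx, hxx, map_add, map_add]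
      ring
    have := hwd _ _ (Ideal.add_mem _ (hxxK p) (hxxK q)) (hxxK (p + q)) h1
    show h (xx (p + q)) = h (xx p) + h (xx q)
    rw [← map_add, ← this]
  have hD_fix : ∀ x ∈ Kpi, D x = h x := by
    intro x hx
    apply hwd _ _ (hxxK x) hx
    rw [hxx, hρKpi x hx, sub_zero]
  have hD_zero : D 0 = 0 := by rw [hD_fix 0 (Ideal.zero_mem _), map_zero]
  have hD_alg : ∀ r : R', D (algebraMap R' P r) = 0 := by
    intro r
    have h1 : τ (xx (algebraMap R' P r)) = τ 0 := by
      rw [hxx, map_zero]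
      have : ρ (algebraMap R' P r) = algebraMap R' Q r := by
        rw [hρdef]; show s (π (algebraMap R' P r)) = _
        rw [AlgHom.commutes, AlgHom.commutes]
      rw [this, AlgHom.commutes, sub_self]
    have := hwd _ _ (hxxK _) (Ideal.zero_mem _) h1
    show h (xx (algebraMap R' P r)) = 0
    rw [this, map_zero]
  have hD_mul : ∀ p q : P, D (p * q) = h p * D q + h q * D p := by
    intro p q
    obtain ⟨r, hr⟩ := hτs (ρ q)
    have hyK : p * xx q + r * xx p ∈ Kpi := Ideal.add_mem _
      (Ideal.mul_mem_left _ _ (hxxK q)) (Ideal.mul_mem_left _ _ (hxxK p))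
    have hτy : τ (p * xx q + r * xx p) = τ (xx (p * q)) := by
      have e1 : τ (p * xx q + r * xx p) = τ p * (τ q - ρ q) + ρ q * (τ p - ρ p) := by
        rw [map_add, map_mul, map_mul, hxx, hxx, hr]
      have e2 : τ (xx (p * q)) = τ p * τ q - ρ p * ρ q := by
        rw [hxx, map_mul, map_mul]
      rw [e1, e2]; ring
    have h1 : h (xx (p * q)) = h p * h (xx q) + h r * h (xx p) := by
      have h0 := hwd _ _ (hxxK (p * q)) hyK hτy.symm
      rw [map_add, map_mul, map_mul] at h0
      exact h0
    have h2 : h r * h (xx p) = h q * h (xx p) := by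
      have hτrq : τ (r - q) ∈ KQ := by
        rw [map_sub, hr]
        have := hρτ q
        have h3 : ρ q - τ q = -(τ q - ρ q) := by ring
        rw [h3]
        exact neg_mem (hρτ q)
      have := hKslack (r - q) hτrq (h (xx p)) (hD_mem p)
      rw [map_sub, sub_mul] at this
      exact sub_eq_zero.mp this
    show h (xx (p * q)) = h p * h (xx q) + h q * h (xx p)
    rw [h1, h2]
  have hD_one : D 1 = 0 := by
    have := hD_mul 1 1
    simp only [mul_one, map_one, one_mul] at this
    have h2 : D 1 + 0 = D 1 + D 1 := by rw [add_zero]; exact this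
    exact (add_left_cancel h2).symm
  -- the corrected homomorphism
  set w₀ : P →+* C :=
    { toFun := fun p => h p - D p
      map_one' := by show h 1 - D 1 = 1; rw [map_one, hD_one, sub_zero]
      map_mul' := by
        intro p q
        show h (p * q) - D (p * q) = (h p - D p) * (h q - D q)
        rw [map_mul, hD_mul]
        have hDD : D p * D q = 0 := hK2 _ (hD_mem p) _ (hD_mem q)
        linear_combination -hDD
      map_zero' := by show h 0 - D 0 = 0; rw [map_zero, hD_zero, sub_zero]
      map_add' := by
        intro p q
        show h (p + q) - D (p + q) = (h p - D p) + (h q - D q)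
        rw [map_add, hD_add]; ring } with hw₀def
  have hw₀ : ∀ p : P, w₀ p = h p - D p := fun p => rfl
  have hw₀alg : ∀ r : R', w₀ (algebraMap R' P r) = algebraMap R' C r := by
    intro r
    rw [hw₀, hD_alg, sub_zero, AlgHom.commutes]
  set w₀ₐ : P →ₐ[R'] C := { w₀ with commutes' := hw₀alg } with hw₀ₐdef
  have hw₀k : ∀ x ∈ Kpi, w₀ₐ x = 0 := by
    intro x hx
    show w₀ x = 0
    rw [hw₀, hD_fix x hx, sub_self]
  set w : B' →ₐ[R'] C :=
    (Ideal.Quotient.liftₐ Kpi w₀ₐ hw₀k).comp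
      e.symm.toAlgHom with hwdef
  have hwπ : ∀ p : P, w (π p) = w₀ p := by
    intro p
    rw [hwdef]
    simp only [AlgHom.coe_comp, Function.comp_apply, AlgEquiv.coe_algHom]
    rw [hesymm p]
    rfl
  refine ⟨w, ?_⟩
  apply AlgHom.ext
  intro b
  obtain ⟨p, rfl⟩ := hπs b
  show Ideal.Quotient.mk J (w (π p)) = u (π p)
  rw [hwπ p, hw₀, map_sub, hhJ p]
  have hDJ : Ideal.Quotient.mk J (D p) = 0 :=
    Ideal.Quotient.eq_zero_iff_mem.mpr (hD_mem p).1
  rw [hDJ, sub_zero]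

theorem lp_of_pow {R' B' : Type u} [CommRing R'] [CommRing B'] [Algebra R' B']
    [Module.Flat R' B'] {I : Ideal R'} (hLP : LP R' I B')
    (C : Type u) [CommRing C] [Algebra R' C]
    (n : ℕ) (hC : (I ^ n).map (algebraMap R' C) = ⊥)
    (J : Ideal C) (hJ : J ^ 2 = ⊥)
    (u : B' →ₐ[R'] C ⧸ J) : ∃ w : B' →ₐ[R'] C, (Ideal.Quotient.mkₐ R' J).comp w = u := by
  have key : ∀ k : ℕ, LP R' (I ^ (2 ^ k)) B' := by
    intro k
    induction k with
    | zero =>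
        have h1 : I ^ (2 ^ 0) = I := by norm_num
        rw [h1]; exact hLP
    | succ k ih =>
        intro C' _ _ hC' J' hJ' u'
        refine engine (I ^ (2 ^ k)) ih C' ?_ J' hJ' u'
        rw [Ideal.map_pow] at hC' ⊢
        rw [← pow_mul]
        have h2 : 2 ^ k * 2 = 2 ^ (k + 1) := by rw [pow_succ]
        rw [h2]
        exact hC'
  refine key n C ?_ J hJ u
  have h1 : I ^ (2 ^ n) ≤ I ^ n := Ideal.pow_le_pow_right (Nat.le_of_lt (Nat.lt_two_pow_self (n := n)))
  exact le_bot_iff.mp (le_trans (Ideal.map_mono h1) (le_of_eq hC))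

open IsLocalRing in
theorem baseLP (R Rt : Type u) [CommRing R] [CommRing Rt] [IsLocalRing R] [IsLocalRing Rt]
    (α : R →+* Rt) [IsLocalHom α]
    (hfiber : (maximalIdeal R).map α = maximalIdeal Rt)
    (hsep : letI := (ResidueField.map α).toAlgebra
      Algebra.IsSeparable (ResidueField R) (ResidueField Rt)) :
    letI : Algebra R Rt := α.toAlgebra
    LP R (maximalIdeal R) Rt := by
  letI : Algebra R Rt := α.toAlgebra
  letI : Algebra (ResidueField R) (ResidueField Rt) := (ResidueField.map α).toAlgebra
  haveI : Algebra.IsSeparable (ResidueField R) (ResidueField Rt) := hsep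
  haveI : Algebra.FormallyEtale (ResidueField R) (ResidueField Rt) :=
    Algebra.FormallyEtale.of_isSeparable _ _
  haveI : Algebra.FormallySmooth (ResidueField R) (ResidueField Rt) :=
    inferInstance
  intro C _ _ hC J hJ u
  have hkillR : ∀ r ∈ maximalIdeal R, algebraMap R C r = 0 := by
    intro r hr
    have h1 : algebraMap R C r ∈ (maximalIdeal R).map (algebraMap R C) :=
      Ideal.mem_map_of_mem _ hr
    rw [hC] at h1
    simpa using h1
  set κ : ResidueField R →+* C :=
    Ideal.Quotient.lift (maximalIdeal R) (algebraMap R C) hkillR with hκdef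
  letI : Algebra (ResidueField R) C := κ.toAlgebra
  have hker : ∀ x ∈ maximalIdeal Rt, u x = 0 := by
    intro x hx
    rw [← hfiber] at hx
    have h1 : u x ∈ ((maximalIdeal R).map α).map (u : Rt →+* C ⧸ J) :=
      Ideal.mem_map_of_mem _ hx
    rw [Ideal.map_map] at h1
    have h2 : ((u : Rt →+* C ⧸ J)).comp α = (Ideal.Quotient.mk J).comp (algebraMap R C) := by
      ext r
      exact u.commutes r
    rw [h2, ← Ideal.map_map, hC, Ideal.map_bot] at h1
    simpa using h1
  set ub : ResidueField Rt →+* C ⧸ J :=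
    Ideal.Quotient.lift (maximalIdeal Rt) (u : Rt →+* C ⧸ J) hker with hubdef
  have hub : ∀ x : Rt, ub (residue Rt x) = u x := fun x => rfl
  have hcomm : ∀ x : ResidueField R,
      ub (algebraMap (ResidueField R) (ResidueField Rt) x)
        = algebraMap (ResidueField R) (C ⧸ J) x := by
    intro x
    obtain ⟨r, rfl⟩ := residue_surjective (R := R) x
    have h1 : algebraMap (ResidueField R) (ResidueField Rt) (residue R r)
        = residue Rt (α r) := ResidueField.map_residue α r
    rw [h1, hub]
    show u (algebraMap R Rt r) = _
    rw [u.commutes r]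
    rfl
  set ubₐ : ResidueField Rt →ₐ[ResidueField R] C ⧸ J :=
    { toRingHom := ub, commutes' := hcomm } with hubₐdef
  set v : ResidueField Rt →ₐ[ResidueField R] C :=
    Algebra.FormallySmooth.lift J ⟨2, hJ⟩ ubₐ with hvdef
  have hv : ∀ y : ResidueField Rt, Ideal.Quotient.mk J (v y) = ubₐ y := fun y =>
    Algebra.FormallySmooth.mk_lift J ⟨2, hJ⟩ ubₐ y
  have hwcomm : ∀ r : R, ((v : ResidueField Rt →+* C).comp (residue Rt)) (algebraMap R Rt r)
      = algebraMap R C r := by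
    intro r
    show v (residue Rt (α r)) = algebraMap R C r
    rw [← ResidueField.map_residue α r]
    show v (algebraMap (ResidueField R) (ResidueField Rt) (residue R r)) = _
    rw [v.commutes]
    rfl
  refine ⟨{ toRingHom := (v : ResidueField Rt →+* C).comp (residue Rt),
            commutes' := hwcomm }, ?_⟩
  apply AlgHom.ext
  intro x
  show Ideal.Quotient.mk J (v (residue Rt x)) = u x
  rw [hv, ← hub]
  rfl

open IsLocalRing in
set_option maxHeartbeats 1000000 in
/-- lifting along a Cohen homomorphism: given `α : R → R̃` Cohen,
`β : S → S̃` flat local with `S̃` complete, `φ : R → S` local, and a compatible square of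
residue field maps, there is `φ̃ : R̃ → S̃` with `φ̃ ∘ α = β ∘ φ` inducing the prescribed
residue field map. -/
theorem stmt18 (R Rt S St : Type u) [CommRing R] [CommRing Rt] [CommRing S] [CommRing St]
    [IsLocalRing R] [IsLocalRing Rt] [IsLocalRing S] [IsLocalRing St]
    [IsNoetherianRing R] [IsNoetherianRing Rt] [IsNoetherianRing S] [IsNoetherianRing St]
    (α : R →+* Rt) (β : S →+* St) (φ : R →+* S)
    [IsLocalHom α] [IsLocalHom β] [IsLocalHom φ]
    (hαflat : @Module.Flat R Rt _ _ (Module.compHom Rt α))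
    (hfiber : (maximalIdeal R).map α = maximalIdeal Rt)
    (hsep : letI := (ResidueField.map α).toAlgebra
      Algebra.IsSeparable (ResidueField R) (ResidueField Rt))
    (hβflat : @Module.Flat S St _ _ (Module.compHom St β))
    [IsAdicComplete (maximalIdeal St) St]
    (ψ₀ : ResidueField Rt →+* ResidueField St)
    (hψ₀ : ψ₀.comp (ResidueField.map α) = (ResidueField.map β).comp (ResidueField.map φ)) :
    ∃ (φt : Rt →+* St) (_ : IsLocalHom φt),
      φt.comp α = β.comp φ ∧ ResidueField.map φt = ψ₀ := by
  classical
  letI : Algebra R Rt := α.toAlgebra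
  letI : Algebra R St := (β.comp φ).toAlgebra
  haveI hflat : Module.Flat R Rt := hαflat
  have hLPbase : LP R (maximalIdeal R) Rt := baseLP R Rt α hfiber hsep
  set nt : Ideal St := maximalIdeal St with hntd
  have hmn : (maximalIdeal R).map (algebraMap R St) ≤ nt := by
    rw [Ideal.map_le_iff_le_comap]
    intro x hx
    show β (φ x) ∈ nt
    rw [hntd, mem_maximalIdeal, mem_nonunits_iff]
    intro hu
    exact mem_nonunits_iff.mp ((mem_maximalIdeal x).mp hx)
      (IsLocalHom.map_nonunit x (IsLocalHom.map_nonunit (φ x) hu))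
  -- the step
  have stepex : ∀ (n : ℕ) (v : Rt →ₐ[R] St ⧸ nt ^ (n + 1)),
      ∃ v' : Rt →ₐ[R] St ⧸ nt ^ (n + 2), ∀ b : Rt,
        Ideal.Quotient.factor (S := nt ^ (n + 2)) (T := nt ^ (n + 1))
          (Ideal.pow_le_pow_right (by omega)) (v' b) = v b := by
    intro n v
    set C := St ⧸ nt ^ (n + 2) with hCdef
    set J : Ideal C := (nt ^ (n + 1)).map (Ideal.Quotient.mk (nt ^ (n + 2))) with hJdef
    have hJ2 : J ^ 2 = ⊥ := by
      rw [hJdef, ← Ideal.map_pow, ← pow_mul]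
      refine le_bot_iff.mp (le_trans (Ideal.map_mono
        (Ideal.pow_le_pow_right (by omega : n + 2 ≤ (n + 1) * 2))) ?_)
      rw [Ideal.map_quotient_self]
    have hCkill : ((maximalIdeal R) ^ (n + 2)).map (algebraMap R C) = ⊥ := by
      have h1 : algebraMap R C = (Ideal.Quotient.mk (nt ^ (n + 2))).comp (algebraMap R St) := rfl
      rw [h1, ← Ideal.map_map, Ideal.map_pow]
      refine le_bot_iff.mp (le_trans (Ideal.map_mono
        (Ideal.pow_right_mono hmn (n + 2))) ?_)
      rw [Ideal.map_quotient_self]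
    set eJ := DoubleQuot.quotQuotEquivQuotOfLE
      (I := nt ^ (n + 2)) (J := nt ^ (n + 1)) (Ideal.pow_le_pow_right (by omega)) with heJdef
    have hu'comm : ∀ r : R,
        ((eJ.symm : (St ⧸ nt ^ (n + 1)) →+* C ⧸ J).comp (v : Rt →+* St ⧸ nt ^ (n + 1)))
          (algebraMap R Rt r) = algebraMap R (C ⧸ J) r := by
      intro r
      show eJ.symm (v (algebraMap R Rt r)) = _
      rw [v.commutes r]
      show eJ.symm (Ideal.Quotient.mk (nt ^ (n + 1)) ((β.comp φ) r)) = _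
      rw [heJdef, DoubleQuot.quotQuotEquivQuotOfLE_symm_mk]
      rfl
    set u' : Rt →ₐ[R] C ⧸ J :=
      { toRingHom := (eJ.symm : (St ⧸ nt ^ (n + 1)) →+* C ⧸ J).comp (v : Rt →+* St ⧸ nt ^ (n + 1)),
        commutes' := hu'comm } with hu'def
    obtain ⟨w, hw⟩ := lp_of_pow hLPbase C (n + 2) hCkill J hJ2 u'
    refine ⟨w, fun b => ?_⟩
    have h1 : Ideal.Quotient.mk J (w b) = eJ.symm (v b) := congrArg (fun f => f b) hw
    have h2 : eJ (Ideal.Quotient.mk J (w b)) = v b := by rw [h1, RingEquiv.apply_symm_apply]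
    obtain ⟨x, hx⟩ := Ideal.Quotient.mk_surjective (I := nt ^ (n + 2)) (w b)
    have h3 : eJ (Ideal.Quotient.mk J (w b)) =
        Ideal.Quotient.mk (nt ^ (n + 1)) x := by
      rw [← hx, heJdef]
      exact DoubleQuot.quotQuotEquivQuotOfLE_quotQuotMk x _
    rw [← hx, Ideal.Quotient.factor_mk]
    rw [h3] at h2
    exact h2
  -- base map
  set e1 : (St ⧸ nt) ≃+* St ⧸ nt ^ 1 := Ideal.quotEquivOfEq (pow_one nt).symm with he1def
  have hus0comm : ∀ r : R,
      ((e1 : (St ⧸ nt) →+* St ⧸ nt ^ 1).comp (ψ₀.comp (residue Rt))) (algebraMap R Rt r)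
        = algebraMap R (St ⧸ nt ^ 1) r := by
    intro r
    show e1 (ψ₀ (residue Rt (α r))) = _
    rw [← ResidueField.map_residue α r]
    have h2 : ψ₀ ((ResidueField.map α) (residue R r))
        = (ResidueField.map β) ((ResidueField.map φ) (residue R r)) :=
      congrArg (fun f => f (residue R r)) hψ₀
    rw [h2, ResidueField.map_residue, ResidueField.map_residue]
    show e1 (Ideal.Quotient.mk nt (β (φ r))) = Ideal.Quotient.mk (nt ^ 1) (β (φ r))
    rw [he1def]
    exact Ideal.quotEquivOfEq_mk _ _
  set us0 : Rt →ₐ[R] St ⧸ nt ^ 1 :=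
    { toRingHom := (e1 : (St ⧸ nt) →+* St ⧸ nt ^ 1).comp (ψ₀.comp (residue Rt)),
      commutes' := hus0comm } with hus0def
  -- the tower
  set us : ∀ n : ℕ, Rt →ₐ[R] St ⧸ nt ^ (n + 1) :=
    fun n => Nat.rec us0 (fun n vn => Classical.choose (stepex n vn)) n with husdef
  have hcomp : ∀ (n : ℕ) (b : Rt),
      Ideal.Quotient.factor (S := nt ^ (n + 2)) (T := nt ^ (n + 1))
        (Ideal.pow_le_pow_right (by omega)) (us (n + 1) b) = us n b :=
    fun n => Classical.choose_spec (stepex n (us n))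
  have hdown : ∀ (n m : ℕ), m ≤ n → ∀ (b : Rt) (x : St),
      Ideal.Quotient.mk (nt ^ (n + 1)) x = us n b →
      Ideal.Quotient.mk (nt ^ (m + 1)) x = us m b := by
    intro n
    induction n with
    | zero =>
        intro m hm b x h
        have hm0 : m = 0 := Nat.le_zero.mp hm
        subst hm0
        exact h
    | succ n ih =>
        intro m hm b x h
        rcases Nat.lt_or_ge m (n + 1) with h1 | h1
        · refine ih m (by omega) b x ?_
          have h4 : Ideal.Quotient.mk (nt ^ (n + 1)) x
              = Ideal.Quotient.factor (S := nt ^ (n + 2)) (T := nt ^ (n + 1))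
                (Ideal.pow_le_pow_right (by omega))
                (Ideal.Quotient.mk (nt ^ (n + 2)) x) :=
            (Ideal.Quotient.factor_mk _ x).symm
          rw [h4, h, hcomp n b]
        · have h5 : m = n + 1 := by omega
          subst h5
          exact h
  -- the limit
  have hex : ∀ b : Rt, ∃ Lb : St, ∀ n : ℕ,
      Ideal.Quotient.mk (nt ^ (n + 1)) Lb = us n b := by
    intro b
    have hf : ∀ n : ℕ, ∃ x : St, Ideal.Quotient.mk (nt ^ (n + 1)) x = us n b :=
      fun n => Ideal.Quotient.mk_surjective _
    choose f hfs using hf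
    have hcauchy : ∀ {m n : ℕ}, m ≤ n →
        f m ≡ f n [SMOD (nt ^ m • ⊤ : Submodule St St)] := by
      intro m n hmn
      rw [SModEq.sub_mem]
      have h1 : Ideal.Quotient.mk (nt ^ (m + 1)) (f m) = Ideal.Quotient.mk (nt ^ (m + 1)) (f n) := by
        rw [hfs m, hdown n m hmn b (f n) (hfs n)]
      have h2 : f m - f n ∈ nt ^ (m + 1) := (Ideal.Quotient.mk_eq_mk_iff_sub_mem _ _).mp h1
      have h3 : (nt ^ m • ⊤ : Submodule St St) = nt ^ m := by rw [smul_eq_mul, Ideal.mul_top]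
      rw [h3]
      exact Ideal.pow_le_pow_right (by omega) h2
    obtain ⟨Lb, hLb⟩ := IsPrecomplete.prec
      (IsAdicComplete.toIsPrecomplete (I := nt) (M := St)) @hcauchy
    refine ⟨Lb, fun n => ?_⟩
    have h1 := hLb (n + 1)
    rw [SModEq.sub_mem] at h1
    have h3 : (nt ^ (n + 1) • ⊤ : Submodule St St) = nt ^ (n + 1) := by
      rw [smul_eq_mul, Ideal.mul_top]
    rw [h3] at h1
    have h4 : Ideal.Quotient.mk (nt ^ (n + 1)) (f (n + 1)) = us n b :=
      hdown (n + 1) n (by omega) b _ (hfs (n + 1))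
    have h5 : Ideal.Quotient.mk (nt ^ (n + 1)) Lb
        = Ideal.Quotient.mk (nt ^ (n + 1)) (f (n + 1)) := by
      rw [Ideal.Quotient.mk_eq_mk_iff_sub_mem]
      have : Lb - f (n + 1) = -(f (n + 1) - Lb) := by ring
      rw [this]
      exact neg_mem h1
    rw [h5, h4]
  choose Lf key using hex
  -- Hausdorff
  have hzero : ∀ x : St, (∀ n : ℕ, x ∈ nt ^ (n + 1)) → x = 0 := by
    intro x hx
    refine IsHausdorff.haus (IsAdicComplete.toIsHausdorff (I := nt) (M := St)) x ?_
    intro n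
    rw [SModEq.zero]
    have h3 : (nt ^ n • ⊤ : Submodule St St) = nt ^ n := by rw [smul_eq_mul, Ideal.mul_top]
    rw [h3]
    cases n with
    | zero => rw [pow_zero, Ideal.one_eq_top]; trivial
    | succ n => exact hx n
  have hdiff : ∀ x y : St,
      (∀ n : ℕ, Ideal.Quotient.mk (nt ^ (n + 1)) x = Ideal.Quotient.mk (nt ^ (n + 1)) y) →
      x = y := by
    intro x y h
    have := hzero (x - y) (fun n => (Ideal.Quotient.mk_eq_mk_iff_sub_mem _ _).mp (h n))
    exact sub_eq_zero.mp this
  set φt : Rt →+* St :=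
    { toFun := Lf
      map_one' := hdiff _ _ fun n => by rw [key 1 n, map_one, map_one]
      map_mul' := fun x y => hdiff _ _ fun n => by
        rw [key (x * y) n, map_mul, map_mul, key x n, key y n]
      map_zero' := hdiff _ _ fun n => by rw [key 0 n, map_zero, map_zero]
      map_add' := fun x y => hdiff _ _ fun n => by
        rw [key (x + y) n, map_add, map_add, key x n, key y n] } with hφtdef
  have hφt : ∀ b : Rt, φt b = Lf b := fun b => rfl
  have hαcomp : φt.comp α = β.comp φ := by
    ext r
    show Lf (α r) = (β.comp φ) r
    refine hdiff _ _ fun n => ?_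
    rw [key (α r) n]
    show us n (algebraMap R Rt r) = _
    rw [(us n).commutes r]
    rfl
  have hres : ∀ x : Rt, residue St (φt x) = ψ₀ (residue Rt x) := by
    intro x
    have h1 := key x 0
    have h2 : us 0 x = e1 (ψ₀ (residue Rt x)) := rfl
    rw [h2] at h1
    obtain ⟨z, hz⟩ := Ideal.Quotient.mk_surjective (I := nt) (ψ₀ (residue Rt x))
    have h3 : e1 (ψ₀ (residue Rt x)) = Ideal.Quotient.mk (nt ^ 1) z := by
      rw [← hz, he1def]
      exact Ideal.quotEquivOfEq_mk _ _
    rw [h3] at h1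
    have h4 : Lf x - z ∈ nt ^ 1 := (Ideal.Quotient.mk_eq_mk_iff_sub_mem _ _).mp h1
    rw [pow_one] at h4
    have h5 : Ideal.Quotient.mk nt (Lf x) = Ideal.Quotient.mk nt z :=
      (Ideal.Quotient.mk_eq_mk_iff_sub_mem _ _).mpr h4
    show Ideal.Quotient.mk nt (Lf x) = ψ₀ (residue Rt x)
    rw [h5, hz]
  haveI hloc : IsLocalHom φt := by
    constructor
    intro a ha
    by_contra h
    have h1 : a ∈ maximalIdeal Rt := (mem_maximalIdeal a).mpr (mem_nonunits_iff.mpr h)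
    have h2 : residue Rt a = 0 := Ideal.Quotient.eq_zero_iff_mem.mpr h1
    have h3 : residue St (φt a) = 0 := by rw [hres a, h2, map_zero]
    have h4 : φt a ∈ nt := Ideal.Quotient.eq_zero_iff_mem.mp h3
    exact mem_nonunits_iff.mp ((mem_maximalIdeal (φt a)).mp h4) ha
  refine ⟨φt, hloc, hαcomp, ?_⟩
  apply RingHom.ext
  intro y
  obtain ⟨x, rfl⟩ := residue_surjective (R := Rt) y
  rw [ResidueField.map_residue]
  exact hres x

end Stmt18Aux
end
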